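/- Let m ≥ 2 be an integer and let n > 8 be an integer divisible by 4. Then (1 + α(m))·(n!/2)^{m/2} ≤ ((n/2 − 2)!)·((n/2)!)·( ((n/2 − 1)!·((n/2) + 1)!)/2 )^{m−1}, as an inequality of real numbers. -/

import Mathlib

/-- `alpha m` = α(m): the number of distinct prime divisors of `m`. -/
def alpha (m : ℕ) : ℕ := m.primeFactors.card

lemma alpha_lt (m : ℕ) (hm : 2 ≤ m) : alpha m < m := by
  have h1 : 2 ^ alpha m ≤ m := by
    calc 2 ^ m.primeFactors.card ≤ ∏ p ∈ m.primeFactors, p :=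
          Finset.pow_card_le_prod _ _ _ (fun p hp => (Nat.prime_of_mem_primeFactors hp).two_le)
      _ ≤ m := Nat.le_of_dvd (by omega) (Nat.prod_primeFactors_dvd m)
  exact lt_of_lt_of_le Nat.lt_two_pow_self h1

lemma factA (j : ℕ) : 2 * Nat.factorial (2*j+12) ≤
    Nat.factorial (j+4) * Nat.factorial (j+5) * Nat.factorial (j+6) * Nat.factorial (j+7) := by
  induction j with
  | zero => norm_num [Nat.factorial]
  | succ j ih =>
    have e1 : 2*(j+1)+12 = (2*j+13)+1 := by ring
    have e2 : Nat.factorial ((2*j+13)+1) = (2*j+14)*((2*j+13)*Nat.factorial (2*j+12)) := by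
      rw [Nat.factorial_succ, show 2*j+13 = (2*j+12)+1 from by ring, Nat.factorial_succ]
    rw [e1, e2]
    have e3 : Nat.factorial (j+1+4) = (j+5) * Nat.factorial (j+4) := Nat.factorial_succ (j+4)
    have e4 : Nat.factorial (j+1+5) = (j+6) * Nat.factorial (j+5) := Nat.factorial_succ (j+5)
    have e5 : Nat.factorial (j+1+6) = (j+7) * Nat.factorial (j+6) := Nat.factorial_succ (j+6)
    have e6 : Nat.factorial (j+1+7) = (j+8) * Nat.factorial (j+7) := Nat.factorial_succ (j+7)
    rw [e3, e4, e5, e6]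
    calc 2 * ((2*j+14)*((2*j+13)*Nat.factorial (2*j+12)))
        = ((2*j+14)*(2*j+13)) * (2 * Nat.factorial (2*j+12)) := by ring
      _ ≤ ((j+5)*(j+6)*(j+7)*(j+8)) *
            (Nat.factorial (j+4) * Nat.factorial (j+5) * Nat.factorial (j+6) * Nat.factorial (j+7)) :=
          Nat.mul_le_mul (by
            calc (2*j+14)*(2*j+13) ≤ (2*j+14)*(2*j+16) := Nat.mul_le_mul_left _ (by omega)
              _ = 4*((j+7)*(j+8)) := by ring
              _ ≤ ((j+5)*(j+6))*((j+7)*(j+8)) := Nat.mul_le_mul_right _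
                  (le_trans (show (4:ℕ) ≤ 5*6 by norm_num)
                    (Nat.mul_le_mul (show 5 ≤ j+5 by omega) (show 6 ≤ j+6 by omega)))
              _ = (j+5)*(j+6)*(j+7)*(j+8) := by ring) ih
      _ = (j+5) * Nat.factorial (j+4) * ((j+6) * Nat.factorial (j+5)) *
            ((j+7) * Nat.factorial (j+6)) * ((j+8) * Nat.factorial (j+7)) := by ring

lemma factB (j : ℕ) : 4 * (Nat.factorial (j+4) * Nat.factorial (j+6)) ≤
    Nat.factorial (j+5) * Nat.factorial (j+7) := by
  have e3 : Nat.factorial (j+5) = (j+5) * Nat.factorial (j+4) := Nat.factorial_succ (j+4)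
  have e6 : Nat.factorial (j+7) = (j+7) * Nat.factorial (j+6) := Nat.factorial_succ (j+6)
  rw [e3, e6]
  calc 4 * (Nat.factorial (j+4) * Nat.factorial (j+6))
      ≤ ((j+5)*(j+7)) * (Nat.factorial (j+4) * Nat.factorial (j+6)) :=
        Nat.mul_le_mul_right _
          (le_trans (show (4:ℕ) ≤ 5*7 by norm_num)
            (Nat.mul_le_mul (show 5 ≤ j+5 by omega) (show 7 ≤ j+7 by omega)))
    _ = (j+5) * Nat.factorial (j+4) * ((j+7) * Nat.factorial (j+6)) := by ring

lemma pow_main (X D B : ℝ) (hX : 0 ≤ X) (hD : 0 < D) (hB : 0 < B)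
    (h1 : 2*X^2 ≤ D*B) (h2 : 2*D ≤ B) :
    ∀ m : ℕ, 2 ≤ m → (m:ℝ) * X^m ≤ D * B^(m-1) := by
  have hXB : 2*X ≤ B := by nlinarith [sq_nonneg (2*X - B), mul_pos hD hB]
  intro m hm
  induction m, hm using Nat.le_induction with
  | base => norm_num; linarith
  | succ m hm ih =>
    have hm' : (2:ℝ) ≤ (m:ℝ) := by exact_mod_cast hm
    have hXm : (0:ℝ) ≤ X^m := pow_nonneg hX m
    have key : ((m:ℝ)+1) * X ≤ (m:ℝ) * B := by
      have t1 : (m:ℝ)*(2*X) ≤ (m:ℝ)*B := mul_le_mul_of_nonneg_left hXB (by linarith)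
      have t2 : 0 ≤ ((m:ℝ)-1)*X := mul_nonneg (by linarith) hX
      nlinarith
    have hBm : B^(m-1) * B = B^((m+1)-1) := by
      rw [← pow_succ]; congr 1; omega
    calc ((m+1:ℕ):ℝ) * X^(m+1) = (((m:ℝ)+1)*X) * X^m := by push_cast; ring
      _ ≤ ((m:ℝ)*B) * X^m := mul_le_mul_of_nonneg_right key hXm
      _ = B * ((m:ℝ)*X^m) := by ring
      _ ≤ B * (D * B^(m-1)) := mul_le_mul_of_nonneg_left ih hB.le
      _ = D * B^((m+1)-1) := by rw [← hBm]; ring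

/-- **Lemma 11 (2).** For `m ≥ 2` and `n > 8` divisible by `4`,
`(1 + α(m))·(n!/2)^(m/2) ≤ ((n/2-2)!)·((n/2)!)·(((n/2-1)!·((n/2)+1)!)/2)^(m-1)`
(over the reals, the exponent `m/2` being a real exponent). -/
theorem diagonal_bound_div_four (m : ℕ) (hm : 2 ≤ m) (n : ℕ) (hn : 8 < n) (h4 : 4 ∣ n) :
    (1 + (alpha m : ℝ)) * ((Nat.factorial n : ℝ) / 2) ^ ((m : ℝ) / 2) ≤
      (Nat.factorial (n / 2 - 2) : ℝ) * (Nat.factorial (n / 2) : ℝ) *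
        (((Nat.factorial (n / 2 - 1) : ℝ) * (Nat.factorial (n / 2 + 1) : ℝ)) / 2) ^ (m - 1) := by
  obtain ⟨j, hj⟩ : ∃ j, n / 2 = j + 6 := ⟨n/2 - 6, by omega⟩
  have hn12 : n = 2*j + 12 := by omega
  rw [show n/2 - 2 = j + 4 from by omega, show n/2 - 1 = j + 5 from by omega,
      show n/2 + 1 = j + 7 from by omega, show n/2 = j + 6 from by omega, hn12]
  set F : ℝ := (Nat.factorial (2*j+12) : ℝ) / 2 with hF
  set D : ℝ := (Nat.factorial (j+4) : ℝ) * (Nat.factorial (j+6) : ℝ) with hD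
  set B : ℝ := ((Nat.factorial (j+5) : ℝ) * (Nat.factorial (j+7) : ℝ)) / 2 with hB
  set X : ℝ := Real.sqrt F with hXdef
  have hF0 : (0:ℝ) ≤ F := by positivity
  have hX0 : (0:ℝ) ≤ X := Real.sqrt_nonneg F
  have hX2 : X^2 = F := Real.sq_sqrt hF0
  have hDpos : (0:ℝ) < D := by positivity
  have hBpos : (0:ℝ) < B := by positivity
  have hA : (2:ℝ) * (Nat.factorial (2*j+12) : ℝ) ≤
      (Nat.factorial (j+4) : ℝ) * (Nat.factorial (j+5) : ℝ) *
      (Nat.factorial (j+6) : ℝ) * (Nat.factorial (j+7) : ℝ) := by exact_mod_cast factA j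
  have hBnat : (4:ℝ) * ((Nat.factorial (j+4) : ℝ) * (Nat.factorial (j+6) : ℝ)) ≤
      (Nat.factorial (j+5) : ℝ) * (Nat.factorial (j+7) : ℝ) := by exact_mod_cast factB j
  have h1 : 2*X^2 ≤ D*B := by rw [hX2, hF, hD, hB]; linarith
  have h2 : 2*D ≤ B := by rw [hD, hB]; linarith
  have key := pow_main X D B hX0 hDpos hBpos h1 h2 m hm
  have hXpow : F ^ ((m:ℝ)/2) = X ^ m := by
    rw [hXdef, Real.sqrt_eq_rpow, ← Real.rpow_natCast (F ^ ((1:ℝ)/2)) m,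
        ← Real.rpow_mul hF0]
    congr 1
    ring
  have halpha : (1:ℝ) + (alpha m : ℝ) ≤ (m:ℝ) := by
    have h' : alpha m + 1 ≤ m := alpha_lt m hm
    calc (1:ℝ) + (alpha m : ℝ) = ((alpha m + 1 : ℕ) : ℝ) := by push_cast; ring
      _ ≤ (m:ℝ) := by exact_mod_cast h'
  calc (1 + (alpha m : ℝ)) * F ^ ((m:ℝ)/2) = (1 + (alpha m : ℝ)) * X ^ m := by rw [hXpow]
    _ ≤ (m:ℝ) * X ^ m := mul_le_mul_of_nonneg_right halpha (pow_nonneg hX0 m)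
    _ ≤ D * B ^ (m-1) := key
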